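/- Let f : ℝⁿ → ℝ ∪ {+∞} be a polyhedral convex function with f(0) = 0 that is proper. Then the range of its subdifferential mapping, ⋃_{x} ∂f(x), equals dom f*, which is a polyhedral (hence closed) convex set. -/

import Mathlib

open scoped RealInnerProductSpace

open Finset

section FM
variable {E : Type} [AddCommGroup E] [Module ℝ E]

lemma phi_decomp (φ : (E × ℝ) →ₗ[ℝ] ℝ) (x : E) (t : ℝ) :
    φ (x, t) = φ (x, 0) + t * φ (0, 1) := by
  have h : (x, t) = (x, (0:ℝ)) + t • ((0:E), (1:ℝ)) := by
    simp [Prod.ext_iff]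
  rw [h, map_add, map_smul, smul_eq_mul]

lemma sum_if_single {ι : Type} [Fintype ι] [DecidableEq ι] (i : ι) (A : ℝ) (g : ι → ℝ) :
    ∑ i'', (if i'' = i then A else 0) * g i'' = A * g i := by
  simp [ite_mul, Finset.sum_ite_eq']

lemma FMstep {ι : Type} [Fintype ι] (φ : ι → (E × ℝ) →ₗ[ℝ] ℝ) :
    ∃ (κ : Type) (_ : Fintype κ) (μ : κ → ι → ℝ), (∀ j i, 0 ≤ μ j i) ∧
      (∀ j (t : ℝ), ∑ i, μ j i * φ i (0, t) = 0) ∧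
      ∀ b : ι → ℝ, {x : E | ∃ t, ∀ i, φ i (x, t) ≤ b i} =
        {x : E | ∀ j, ∑ i, μ j i * φ i (x, 0) ≤ ∑ i, μ j i * b i} := by
  classical
  set c : ι → ℝ := fun i => φ i (0, 1) with hc
  have hphi0 : ∀ i t, φ i ((0:E), t) = t * c i := by
    intro i t
    have h := phi_decomp (φ i) 0 t
    rw [show ((0:E), (0:ℝ)) = (0 : E × ℝ) from rfl, map_zero, zero_add] at h
    exact h
  refine ⟨ι ⊕ ι × ι, inferInstance,
    Sum.elim (fun i i'' => if c i = 0 ∧ i'' = i then 1 else 0)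
      (fun p i'' => if 0 < c p.1 ∧ c p.2 < 0 then
        (if i'' = p.1 then -(c p.2) else 0) + (if i'' = p.2 then c p.1 else 0) else 0),
    ?_, ?_, ?_⟩
  · rintro (i | ⟨i, i'⟩) i''
    · dsimp only [Sum.elim_inl]; split_ifs <;> norm_num
    · dsimp only [Sum.elim_inr]
      by_cases h : 0 < c i ∧ c i' < 0
      · simp only [h, and_self, if_true]
        have h1 := h.1; have h2 := h.2
        split_ifs <;> linarith
      · simp [h]
  · rintro (i | ⟨i, i'⟩) t
    · dsimp only [Sum.elim_inl]
      by_cases hci : c i = 0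
      · simp only [hci, true_and]
        rw [sum_if_single i 1 (fun i'' => φ i'' (0, t))]
        simp [hphi0, hci]
      · simp [hci, false_and]
    · dsimp only [Sum.elim_inr]
      by_cases h : 0 < c i ∧ c i' < 0
      · simp only [h, and_self, if_true, add_mul]
        rw [Finset.sum_add_distrib,
          sum_if_single i (-(c i')) (fun i'' => φ i'' (0, t)),
          sum_if_single i' (c i) (fun i'' => φ i'' (0, t))]
        simp only [hphi0]; ring
      · simp [h]
  · intro b
    ext x
    simp only [Set.mem_setOf_eq]
    constructor
    · rintro ⟨t, ht⟩ j
      rcases j with i | ⟨i, i'⟩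
      · dsimp only [Sum.elim_inl]
        by_cases hci : c i = 0
        · simp only [hci, true_and]
          rw [sum_if_single i 1 (fun i'' => φ i'' (x, 0)),
            sum_if_single i 1 b]
          have := ht i
          rw [phi_decomp (φ i) x t, show (φ i) ((0:E),(1:ℝ)) = c i from rfl, hci] at this
          simpa using this
        · simp [hci, false_and]
      · dsimp only [Sum.elim_inr]
        by_cases h : 0 < c i ∧ c i' < 0
        · simp only [h, and_self, if_true, add_mul]
          rw [Finset.sum_add_distrib, Finset.sum_add_distrib,
            sum_if_single i (-(c i')) (fun i'' => φ i'' (x, 0)),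
            sum_if_single i' (c i) (fun i'' => φ i'' (x, 0)),
            sum_if_single i (-(c i')) b, sum_if_single i' (c i) b]
          have h1 := ht i; have h2 := ht i'
          rw [phi_decomp (φ i) x t, show (φ i) ((0:E),(1:ℝ)) = c i from rfl] at h1
          rw [phi_decomp (φ i') x t, show (φ i') ((0:E),(1:ℝ)) = c i' from rfl] at h2
          nlinarith [h.1, h.2]
        · simp [h]
    · intro H
      have h0 : ∀ i, c i = 0 → φ i (x, 0) ≤ b i := by
        intro i hci
        have := H (Sum.inl i)
        dsimp only [Sum.elim_inl] at this
        simp only [hci, true_and] at this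
        rw [sum_if_single i 1 (fun i'' => φ i'' (x, 0)), sum_if_single i 1 b] at this
        simpa using this
      have hpm : ∀ i i', 0 < c i → c i' < 0 →
          -(c i') * φ i (x, 0) + c i * φ i' (x, 0) ≤ -(c i') * b i + c i * b i' := by
        intro i i' hi hi'
        have := H (Sum.inr (i, i'))
        dsimp only [Sum.elim_inr] at this
        simp only [hi, hi', and_self, if_true, add_mul] at this
        rw [Finset.sum_add_distrib, Finset.sum_add_distrib,
          sum_if_single i (-(c i')) (fun i'' => φ i'' (x, 0)),
          sum_if_single i' (c i) (fun i'' => φ i'' (x, 0)),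
          sum_if_single i (-(c i')) b, sum_if_single i' (c i) b] at this
        exact this
      -- construct t
      set U : ι → ℝ := fun i => (b i - φ i (x, 0)) / c i with hU
      set sp : Finset ι := Finset.univ.filter (fun i => 0 < c i) with hsp
      set sn : Finset ι := Finset.univ.filter (fun i => c i < 0) with hsn
      by_cases hp : sp.Nonempty
      · refine ⟨sp.inf' hp U, ?_⟩
        intro i
        rw [phi_decomp (φ i) x (sp.inf' hp U), show (φ i) ((0:E),(1:ℝ)) = c i from rfl]
        rcases lt_trichotomy (c i) 0 with hci | hci | hci
        · obtain ⟨i0, hi0mem, hi0⟩ := Finset.exists_mem_eq_inf' hp U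
          have hci0 : 0 < c i0 := by
            have := Finset.mem_filter.mp hi0mem
            exact this.2
          have hcomb := hpm i0 i hci0 hci
          have hUi0 : U i0 * c i0 = b i0 - φ i0 (x, 0) := by
            rw [hU]; field_simp
          rw [hi0]
          nlinarith
        · have := h0 i hci
          rw [hci]; linarith
        · have hle : sp.inf' hp U ≤ U i := by
            apply Finset.inf'_le
            simp [hsp, hci]
          have hUi : U i * c i = b i - φ i (x, 0) := by
            rw [hU]; field_simp
          nlinarith
      · by_cases hn : sn.Nonempty
        · refine ⟨sn.sup' hn U, ?_⟩
          intro i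
          rw [phi_decomp (φ i) x (sn.sup' hn U), show (φ i) ((0:E),(1:ℝ)) = c i from rfl]
          rcases lt_trichotomy (c i) 0 with hci | hci | hci
          · have hle : U i ≤ sn.sup' hn U := by
              apply Finset.le_sup'
              simp [hsn, hci]
            have hUi : U i * c i = b i - φ i (x, 0) :=
              div_mul_cancel₀ _ (ne_of_lt hci)
            nlinarith
          · have := h0 i hci
            rw [hci]; linarith
          · exact absurd (Finset.mem_filter.mpr ⟨Finset.mem_univ i, hci⟩)
              (fun hmem => hp ⟨i, hmem⟩)
        · refine ⟨0, ?_⟩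
          intro i
          rw [phi_decomp (φ i) x 0]
          rcases lt_trichotomy (c i) 0 with hci | hci | hci
          · exact absurd (Finset.mem_filter.mpr ⟨Finset.mem_univ i, hci⟩)
              (fun hmem => hn ⟨i, hmem⟩)
          · have := h0 i hci
            simpa using this
          · exact absurd (Finset.mem_filter.mpr ⟨Finset.mem_univ i, hci⟩)
              (fun hmem => hp ⟨i, hmem⟩)

end FM

open Finset

section FM2
variable {E : Type} [AddCommGroup E] [Module ℝ E]

noncomputable def snocL (N : ℕ) : ((Fin N → ℝ) × ℝ) →ₗ[ℝ] (Fin (N + 1) → ℝ) where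
  toFun p := Fin.snoc p.1 p.2
  map_add' p q := by
    funext i
    by_cases h : (i : ℕ) < N <;> simp [Fin.snoc, h]
  map_smul' c p := by
    funext i
    by_cases h : (i : ℕ) < N <;> simp [Fin.snoc, h]

lemma snoc_zero_zero (N : ℕ) : (Fin.snoc (0 : Fin N → ℝ) (0 : ℝ)) = (0 : Fin (N+1) → ℝ) := by
  funext i
  by_cases h : (i : ℕ) < N <;> simp [Fin.snoc, h]
end FM2

section FM3
variable {E : Type} [AddCommGroup E] [Module ℝ E]


lemma sum_if_single' {ι : Type} [Fintype ι] [DecidableEq ι] (i : ι) (A : ℝ) (g : ι → ℝ) :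
    ∑ i'', (if i'' = i then A else 0) * g i'' = A * g i := by
  simp [ite_mul, Finset.sum_ite_eq']

lemma phi_split {F : Type} [AddCommGroup F] [Module ℝ F] (φ : (E × F) →ₗ[ℝ] ℝ)
    (x : E) (y : F) : φ (x, y) = φ (x, 0) + φ (0, y) := by
  rw [← map_add]; norm_num

lemma FMall (N : ℕ) : ∀ {E : Type} [AddCommGroup E] [Module ℝ E]
    {ι : Type} [Fintype ι] (φ : ι → (E × (Fin N → ℝ)) →ₗ[ℝ] ℝ),
    ∃ (κ : Type) (_ : Fintype κ) (μ : κ → ι → ℝ), (∀ j i, 0 ≤ μ j i) ∧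
      (∀ j (y : Fin N → ℝ), ∑ i, μ j i * φ i (0, y) = 0) ∧
      ∀ b : ι → ℝ, {x : E | ∃ y, ∀ i, φ i (x, y) ≤ b i} =
        {x : E | ∀ j, ∑ i, μ j i * φ i (x, 0) ≤ ∑ i, μ j i * b i} := by
  induction N with
  | zero =>
    intro E _ _ ι _ φ
    classical
    refine ⟨ι, inferInstance, fun j i => if i = j then 1 else 0, ?_, ?_, ?_⟩
    · intro j i; dsimp only; split <;> norm_num
    · intro j y
      rw [sum_if_single' j 1 (fun i => φ i (0, y))]
      have hy : y = 0 := Subsingleton.elim y 0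
      subst hy
      have : ((0 : E), (0 : Fin 0 → ℝ)) = (0 : E × (Fin 0 → ℝ)) := rfl
      rw [this, map_zero, one_mul]
    · intro b
      ext x
      simp only [Set.mem_setOf_eq]
      constructor
      · rintro ⟨y, hy⟩ j
        rw [sum_if_single' j 1 (fun i => φ i (x, 0)), sum_if_single' j 1 b, one_mul, one_mul]
        have : y = 0 := Subsingleton.elim y 0
        subst this
        exact hy j
      · intro H
        refine ⟨0, fun i => ?_⟩
        have := H i
        rwa [sum_if_single' i 1 (fun i' => φ i' (x, 0)), sum_if_single' i 1 b,
          one_mul, one_mul] at this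
  | succ N IH =>
    intro E _ _ ι _ φ
    classical
    set E' := E × (Fin N → ℝ) with hE'
    set ρ : (E' × ℝ) →ₗ[ℝ] (E × (Fin (N + 1) → ℝ)) :=
      LinearMap.prod
        ((LinearMap.fst ℝ E (Fin N → ℝ)).comp (LinearMap.fst ℝ E' ℝ))
        ((snocL N).comp (LinearMap.prodMap (LinearMap.snd ℝ E (Fin N → ℝ)) LinearMap.id))
      with hρ
    have hρ_apply : ∀ (w : E') (t : ℝ), ρ (w, t) = (w.1, Fin.snoc w.2 t) := fun w t => rfl
    obtain ⟨κ1, _, μ1, hμ1pos, hμ1zero, hμ1sets⟩ := FMstep (fun i => (φ i).comp ρ)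
    set χ : κ1 → E' →ₗ[ℝ] ℝ :=
      fun j => ∑ i, μ1 j i • (((φ i).comp ρ).comp (LinearMap.inl ℝ E' ℝ)) with hχdef
    have hχ : ∀ j (z : E'), χ j z = ∑ i, μ1 j i * ((φ i).comp ρ) (z, 0) := by
      intro j z
      rw [hχdef]
      simp [LinearMap.sum_apply, LinearMap.smul_apply]
    obtain ⟨κ2, _, μ2, hμ2pos, hμ2zero, hμ2sets⟩ := IH χ
    have hkey : ∀ (g : ι → ℝ) (l : κ2),
        ∑ i, (∑ j, μ2 l j * μ1 j i) * g i = ∑ j, μ2 l j * (∑ i, μ1 j i * g i) := by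
      intro g l
      simp only [Finset.sum_mul, Finset.mul_sum, mul_assoc]
      rw [Finset.sum_comm]
    refine ⟨κ2, inferInstance, fun l i => ∑ j, μ2 l j * μ1 j i, ?_, ?_, ?_⟩
    · intro l i
      exact Finset.sum_nonneg fun j _ => mul_nonneg (hμ2pos l j) (hμ1pos j i)
    · intro l y
      rw [hkey (fun i => φ i (0, y)) l]
      have hterm : ∀ j, (∑ i, μ1 j i * φ i ((0 : E), y)) = χ j ((0 : E), Fin.init y) := by
        intro j
        have hsnoc : ((0 : E), y) = ρ ((((0 : E), Fin.init y) : E'), y (Fin.last N)) := by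
          rw [hρ_apply, Fin.snoc_init_self]
        calc ∑ i, μ1 j i * φ i ((0 : E), y)
            = ∑ i, μ1 j i * ((φ i).comp ρ) ((((0 : E), Fin.init y) : E'), y (Fin.last N)) := by
              simp only [LinearMap.comp_apply, ← hsnoc]
          _ = ∑ i, (μ1 j i * ((φ i).comp ρ) ((((0 : E), Fin.init y) : E'), (0:ℝ))
                + μ1 j i * ((φ i).comp ρ) ((0 : E'), y (Fin.last N))) := by
              refine Finset.sum_congr rfl fun i _ => ?_
              rw [phi_split ((φ i).comp ρ) (((0 : E), Fin.init y) : E') (y (Fin.last N)),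
                mul_add]
          _ = χ j ((0 : E), Fin.init y) := by
              rw [Finset.sum_add_distrib, hμ1zero j (y (Fin.last N)), add_zero, hχ]
      calc ∑ j, μ2 l j * (∑ i, μ1 j i * φ i ((0:E), y))
          = ∑ j, μ2 l j * χ j (((0 : E), Fin.init y)) := by
            refine Finset.sum_congr rfl fun j _ => by rw [hterm j]
        _ = 0 := hμ2zero l (Fin.init y)
    · intro b
      have hsets1 := hμ1sets b
      have hsets2 := hμ2sets (fun j => ∑ i, μ1 j i * b i)
      ext x
      simp only [Set.mem_setOf_eq]
      have hiff1 : (∃ y, ∀ i, φ i (x, y) ≤ b i) ↔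
          (∃ z : Fin N → ℝ, ∀ j, χ j (x, z) ≤ ∑ i, μ1 j i * b i) := by
        constructor
        · rintro ⟨y, hy⟩
          have hmem : ((x, Fin.init y) : E') ∈
              {z : E' | ∃ t, ∀ i, ((φ i).comp ρ) (z, t) ≤ b i} := by
            refine ⟨y (Fin.last N), fun i => ?_⟩
            rw [LinearMap.comp_apply, hρ_apply, Fin.snoc_init_self]
            exact hy i
          rw [hsets1] at hmem
          refine ⟨Fin.init y, fun j => ?_⟩
          rw [hχ]
          exact hmem j
        · rintro ⟨z, hz⟩
          have hmem : ((x, z) : E') ∈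
              {w : E' | ∀ j, ∑ i, μ1 j i * ((φ i).comp ρ) (w, 0) ≤ ∑ i, μ1 j i * b i} := by
            intro j
            rw [← hχ]
            exact hz j
          rw [← hsets1] at hmem
          obtain ⟨t, ht⟩ := hmem
          refine ⟨Fin.snoc z t, fun i => ?_⟩
          have := ht i
          rwa [LinearMap.comp_apply, hρ_apply] at this
      have hiff2 : (∃ z : Fin N → ℝ, ∀ j, χ j (x, z) ≤ ∑ i, μ1 j i * b i) ↔
          (∀ l, ∑ j, μ2 l j * χ j (x, 0) ≤ ∑ j, μ2 l j * (∑ i, μ1 j i * b i)) :=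
        Set.ext_iff.mp hsets2 x
      rw [hiff1, hiff2]
      have hval : ∀ l, ∑ j, μ2 l j * χ j (x, 0) = ∑ i, (∑ j, μ2 l j * μ1 j i) * φ i (x, 0) := by
        intro l
        rw [hkey (fun i => φ i (x, 0)) l]
        refine Finset.sum_congr rfl fun j _ => ?_
        congr 1
        rw [hχ]
        refine Finset.sum_congr rfl fun i _ => ?_
        congr 1
        rw [LinearMap.comp_apply, hρ_apply]
        congr 1
        exact Prod.ext rfl (snoc_zero_zero N)
      constructor
      · intro H l
        have h := H l
        rw [hval l] at h
        rw [← hkey b l] at h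
        exact h
      · intro H l
        have h := H l
        rw [← hval l] at h
        rw [hkey b l] at h
        exact h

end FM3

section FM4
variable {E F : Type} [AddCommGroup E] [Module ℝ E] [AddCommGroup F] [Module ℝ F]
  [FiniteDimensional ℝ F]

lemma FMallF {ι : Type} [Fintype ι] (φ : ι → (E × F) →ₗ[ℝ] ℝ) :
    ∃ (κ : Type) (_ : Fintype κ) (μ : κ → ι → ℝ), (∀ j i, 0 ≤ μ j i) ∧
      (∀ j (y : F), ∑ i, μ j i * φ i (0, y) = 0) ∧
      ∀ b : ι → ℝ, {x : E | ∃ y : F, ∀ i, φ i (x, y) ≤ b i} =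
        {x : E | ∀ j, ∑ i, μ j i * φ i (x, 0) ≤ ∑ i, μ j i * b i} := by
  set d := Module.finrank ℝ F with hd
  set e : (Fin d → ℝ) ≃ₗ[ℝ] F := (Module.finBasis ℝ F).equivFun.symm with he
  set ψ : ι → (E × (Fin d → ℝ)) →ₗ[ℝ] ℝ :=
    fun i => (φ i).comp (LinearMap.prodMap LinearMap.id e.toLinearMap) with hψdef
  have hψ : ∀ i x y', ψ i (x, y') = φ i (x, e y') := fun _ _ _ => rfl
  obtain ⟨κ, _, μ, h1, h2, h3⟩ := FMall d ψ
  refine ⟨κ, inferInstance, μ, h1, ?_, ?_⟩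
  · intro j y
    have h := h2 j (e.symm y)
    have : ∀ i, ψ i ((0 : E), e.symm y) = φ i (0, y) := by
      intro i
      rw [hψ, e.apply_symm_apply]
    calc ∑ i, μ j i * φ i ((0 : E), y) = ∑ i, μ j i * ψ i ((0 : E), e.symm y) := by
          refine Finset.sum_congr rfl fun i _ => by rw [this i]
      _ = 0 := h
  · intro b
    have h := h3 b
    have hL : {x : E | ∃ y : F, ∀ i, φ i (x, y) ≤ b i} =
        {x : E | ∃ y', ∀ i, ψ i (x, y') ≤ b i} := by
      ext x
      simp only [Set.mem_setOf_eq]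
      constructor
      · rintro ⟨y, hy⟩
        exact ⟨e.symm y, fun i => by rw [hψ, e.apply_symm_apply]; exact hy i⟩
      · rintro ⟨y', hy⟩
        exact ⟨e y', fun i => hy i⟩
    have hR : ∀ x i, ψ i (x, (0 : Fin d → ℝ)) = φ i (x, (0 : F)) := by
      intro x i
      rw [hψ, map_zero]
    rw [hL, h]
    ext x
    simp only [Set.mem_setOf_eq]
    constructor
    · intro H j
      have := H j
      calc ∑ i, μ j i * φ i (x, (0:F)) = ∑ i, μ j i * ψ i (x, (0 : Fin d → ℝ)) := by
            refine Finset.sum_congr rfl fun i _ => by rw [hR x i]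
        _ ≤ _ := this
    · intro H j
      have := H j
      calc ∑ i, μ j i * ψ i (x, (0 : Fin d → ℝ)) = ∑ i, μ j i * φ i (x, (0:F)) := by
            refine Finset.sum_congr rfl fun i _ => by rw [hR x i]
        _ ≤ _ := this

lemma hpoly_proj {ι : Type} [Fintype ι] (ψ : ι → (E × F) →ₗ[ℝ] ℝ) (b : ι → ℝ) :
    ∃ (κ : Type) (_ : Fintype κ) (χ : κ → E →ₗ[ℝ] ℝ) (d : κ → ℝ),
      {x : E | ∃ y : F, ∀ i, ψ i (x, y) ≤ b i} = ⋂ j, {x : E | χ j x ≤ d j} := by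
  obtain ⟨κ, _, μ, _, _, h3⟩ := FMallF ψ
  refine ⟨κ, inferInstance, fun j => ∑ i, μ j i • ((ψ i).comp (LinearMap.inl ℝ E F)),
    fun j => ∑ i, μ j i * b i, ?_⟩
  rw [h3 b]
  ext x
  simp only [Set.mem_setOf_eq, Set.mem_iInter, LinearMap.sum_apply, LinearMap.smul_apply,
    LinearMap.comp_apply, LinearMap.inl_apply, smul_eq_mul]

end FM4

set_option maxHeartbeats 1000000 in
/-- For a proper polyhedral convex function `f : ℝⁿ → ℝ ∪ {+∞}` with
`f 0 = 0` (its epigraph is a finite intersection of closed half-spaces), the range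
`⋃_x ∂f(x)` of its subdifferential mapping equals `dom f*`, which is a polyhedral
(hence closed) convex set. -/
theorem stmt_17 (n : ℕ) (f : EuclideanSpace ℝ (Fin n) → EReal)
    (hnebot : ∀ x, f x ≠ ⊥) (hproper : ∃ x, f x ≠ ⊤) (hf0 : f 0 = 0)
    (hpoly : ∃ (m : ℕ) (v : Fin m → EuclideanSpace ℝ (Fin n)) (a b : Fin m → ℝ),
      {p : EuclideanSpace ℝ (Fin n) × ℝ | f p.1 ≤ ((p.2 : ℝ) : EReal)} =
        ⋂ i : Fin m, {p : EuclideanSpace ℝ (Fin n) × ℝ | ⟪v i, p.1⟫ + a i * p.2 ≤ b i})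
    (fstar : EuclideanSpace ℝ (Fin n) → EReal)
    (hfstar : ∀ u, fstar u =
      ⨆ x : EuclideanSpace ℝ (Fin n), (((⟪u, x⟫ : ℝ) : EReal) - f x)) :
    (⋃ x : EuclideanSpace ℝ (Fin n),
        {u : EuclideanSpace ℝ (Fin n) | ∀ y, f x + ((⟪u, y - x⟫ : ℝ) : EReal) ≤ f y}) =
      {u : EuclideanSpace ℝ (Fin n) | fstar u ≠ ⊤} ∧
    (∃ (k : ℕ) (w : Fin k → EuclideanSpace ℝ (Fin n)) (d : Fin k → ℝ),
      {u : EuclideanSpace ℝ (Fin n) | fstar u ≠ ⊤} =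
        ⋂ i : Fin k, {u : EuclideanSpace ℝ (Fin n) | ⟪w i, u⟫ ≤ d i}) ∧
    IsClosed {u : EuclideanSpace ℝ (Fin n) | fstar u ≠ ⊤} ∧
    Convex ℝ {u : EuclideanSpace ℝ (Fin n) | fstar u ≠ ⊤} := by
  classical
  obtain ⟨m, v, a, b, hP⟩ := hpoly
  -- the linear functionals describing the epigraph
  set φ : Fin m → (EuclideanSpace ℝ (Fin n) × ℝ) →ₗ[ℝ] ℝ := fun i =>
    ((innerSL ℝ (v i)).toLinearMap).comp (LinearMap.fst ℝ (EuclideanSpace ℝ (Fin n)) ℝ)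
      + (a i) • (LinearMap.snd ℝ (EuclideanSpace ℝ (Fin n)) ℝ) with hφdef
  have hφ : ∀ i (p : EuclideanSpace ℝ (Fin n) × ℝ), φ i p = ⟪v i, p.1⟫ + a i * p.2 := by
    intro i p
    simp [hφdef]
  have hmem : ∀ p : EuclideanSpace ℝ (Fin n) × ℝ,
      f p.1 ≤ ((p.2 : ℝ) : EReal) ↔ ∀ i, φ i p ≤ b i := by
    intro p
    have h := Set.ext_iff.mp hP p
    simpa [Set.mem_iInter, hφ] using h
  -- a point in the effective domain
  obtain ⟨x0, hx0⟩ := hproper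
  set r0 := (f x0).toReal with hr0def
  have hfx0 : f x0 = ((r0 : ℝ) : EReal) := (EReal.coe_toReal hx0 (hnebot x0)).symm
  -- fstar is nonnegative
  have hzero_le : ∀ u, (0 : EReal) ≤ fstar u := by
    intro u
    rw [hfstar u]
    refine le_iSup_of_le 0 ?_
    rw [inner_zero_right, hf0]
    simp
  have hfne_bot : ∀ u, fstar u ≠ ⊥ := by
    intro u h
    have h0 := hzero_le u
    rw [h, le_bot_iff] at h0
    exact (by simp : (0 : EReal) ≠ ⊥) h0
  -- bound: every value ⟪u,x⟫ - t with (x,t) in the epigraph is at most fstar u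
  have hQbound : ∀ (u : EuclideanSpace ℝ (Fin n)) (r : ℝ), ((r : ℝ) : EReal) = fstar u →
      ∀ (x : EuclideanSpace ℝ (Fin n)) (t : ℝ), f x ≤ ((t : ℝ) : EReal) → ⟪u, x⟫ - t ≤ r := by
    intro u r hr x t hxt
    have h1 : ((⟪u, x⟫ - t : ℝ) : EReal) ≤ ((⟪u, x⟫ : ℝ) : EReal) - f x := by
      rw [EReal.coe_sub]
      exact EReal.sub_le_sub le_rfl hxt
    have h2 : ((⟪u, x⟫ : ℝ) : EReal) - f x ≤ fstar u := by
      rw [hfstar]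
      exact le_iSup (fun y => ((⟪u, y⟫ : ℝ) : EReal) - f y) x
    exact EReal.coe_le_coe_iff.mp ((h1.trans h2).trans hr.symm.le)
  -- if every finite value of the sup is ≤ q0 then fstar u ≤ q0
  have hterm_le : ∀ (u : EuclideanSpace ℝ (Fin n)) (q0 : ℝ),
      (∀ (y : EuclideanSpace ℝ (Fin n)) (s' : ℝ), f y = ((s' : ℝ) : EReal) → ⟪u, y⟫ - s' ≤ q0) →
      fstar u ≤ ((q0 : ℝ) : EReal) := by
    intro u q0 h
    rw [hfstar]
    refine iSup_le fun y => ?_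
    by_cases hy : f y = ⊤
    · rw [hy, EReal.sub_top]
      exact bot_le
    · have hys : f y = (((f y).toReal : ℝ) : EReal) := (EReal.coe_toReal hy (hnebot y)).symm
      rw [hys, ← EReal.coe_sub]
      exact EReal.coe_le_coe_iff.mpr (h y _ hys)
  -- PART 1a: subgradients are in the domain of fstar
  have part1a : ∀ (x u : EuclideanSpace ℝ (Fin n)),
      (∀ y, f x + ((⟪u, y - x⟫ : ℝ) : EReal) ≤ f y) → fstar u ≠ ⊤ := by
    intro x u hsub
    have hx0' := hsub 0
    rw [hf0] at hx0'
    have hxtop : f x ≠ ⊤ := by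
      intro h
      rw [h, EReal.top_add_coe] at hx0'
      exact absurd hx0' (by simp)
    set r := (f x).toReal with hrdef
    have hr : f x = ((r : ℝ) : EReal) := (EReal.coe_toReal hxtop (hnebot x)).symm
    have hle : fstar u ≤ ((⟪u, x⟫ - r : ℝ) : EReal) := by
      apply hterm_le u (⟪u, x⟫ - r)
      intro y s' hys
      have h := hsub y
      rw [hr, hys, inner_sub_right, ← EReal.coe_add] at h
      have := EReal.coe_le_coe_iff.mp h
      linarith
    exact ne_top_of_le_ne_top (EReal.coe_ne_top _) hle
  -- easy direction of the multiplier characterization of dom fstar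
  have dom_of_lam : ∀ (u : EuclideanSpace ℝ (Fin n)) (lam : Fin m → ℝ),
      (∀ i, 0 ≤ lam i) → (∑ i, lam i • v i = u) → (∑ i, lam i * a i = -1) → fstar u ≠ ⊤ := by
    intro u lam hpos hv ha
    have hb : fstar u ≤ ((∑ i, lam i * b i : ℝ) : EReal) := by
      apply hterm_le
      intro y s' hys
      have hyP : ∀ i, φ i (y, s') ≤ b i := (hmem (y, s')).mp (le_of_eq hys)
      have hsum : ∑ i, lam i * (⟪v i, y⟫ + a i * s') ≤ ∑ i, lam i * b i := by
        refine Finset.sum_le_sum fun i _ => mul_le_mul_of_nonneg_left ?_ (hpos i)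
        have := hyP i
        rwa [hφ] at this
      have hiu : ⟪u, y⟫ = ∑ i, lam i * ⟪v i, y⟫ := by
        rw [← hv, sum_inner]
        exact Finset.sum_congr rfl fun i _ => real_inner_smul_left _ _ _
      have hexp : ∑ i, lam i * (⟪v i, y⟫ + a i * s')
          = (∑ i, lam i * ⟪v i, y⟫) + (∑ i, lam i * a i) * s' := by
        rw [Finset.sum_mul, ← Finset.sum_add_distrib]
        exact Finset.sum_congr rfl fun i _ => by ring
      rw [hexp, ha] at hsum
      linarith [hiu]
    exact ne_top_of_le_ne_top (EReal.coe_ne_top _) hb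
  -- hard direction: multipliers exist for every u in dom fstar
  have lam_of_dom : ∀ u : EuclideanSpace ℝ (Fin n), fstar u ≠ ⊤ →
      ∃ lam : Fin m → ℝ, (∀ i, 0 ≤ lam i) ∧ (∑ i, lam i • v i = u) ∧
        (∑ i, lam i * a i = -1) := by
    intro u hu
    set ℓ : (EuclideanSpace ℝ (Fin n) × ℝ) →ₗ[ℝ] ℝ :=
      ((innerSL ℝ u).toLinearMap).comp (LinearMap.fst ℝ (EuclideanSpace ℝ (Fin n)) ℝ)
        - LinearMap.snd ℝ (EuclideanSpace ℝ (Fin n)) ℝ with hℓdef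
    have hℓ : ∀ p : EuclideanSpace ℝ (Fin n) × ℝ, ℓ p = ⟪u, p.1⟫ - p.2 := by
      intro p; simp [hℓdef]
    set Φ : Option (Fin m) → (ℝ × (EuclideanSpace ℝ (Fin n) × ℝ)) →ₗ[ℝ] ℝ :=
      fun o => Option.elim o
        (LinearMap.fst ℝ ℝ (EuclideanSpace ℝ (Fin n) × ℝ)
          - ℓ.comp (LinearMap.snd ℝ ℝ (EuclideanSpace ℝ (Fin n) × ℝ)))
        (fun i => (φ i).comp (LinearMap.snd ℝ ℝ (EuclideanSpace ℝ (Fin n) × ℝ))) with hΦdef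
    have hΦnone : ∀ (s : ℝ) (p : EuclideanSpace ℝ (Fin n) × ℝ), Φ none (s, p) = s - ℓ p := by
      intro s p; simp [hΦdef]
    have hΦsome : ∀ (i : Fin m) (s : ℝ) (p : EuclideanSpace ℝ (Fin n) × ℝ),
        Φ (some i) (s, p) = φ i p := by
      intro i s p; simp [hΦdef]
    set β : Option (Fin m) → ℝ := fun o => Option.elim o 0 b with hβdef
    obtain ⟨κ, _, μ, hμpos, hμzero, hμsets⟩ := FMallF Φ
    have hsets := hμsets β
    set r := (fstar u).toReal with hrdef
    have hr : ((r : ℝ) : EReal) = fstar u := EReal.coe_toReal hu (hfne_bot u)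
    have hQub : ∀ s : ℝ, (∃ p : EuclideanSpace ℝ (Fin n) × ℝ, ∀ o, Φ o (s, p) ≤ β o) →
        s ≤ r := by
      rintro s ⟨p, hp⟩
      have h1 : s - ℓ p ≤ 0 := by
        have := hp none
        rwa [hΦnone] at this
      have h2 : f p.1 ≤ ((p.2 : ℝ) : EReal) := by
        refine (hmem p).mpr fun i => ?_
        have := hp (some i)
        rwa [hΦsome] at this
      have h3 : ⟪u, p.1⟫ - p.2 ≤ r := hQbound u r hr p.1 p.2 h2
      rw [hℓ] at h1
      linarith
    have hQne : ∃ s : ℝ, ∃ p : EuclideanSpace ℝ (Fin n) × ℝ, ∀ o, Φ o (s, p) ≤ β o := by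
      refine ⟨ℓ (x0, r0), (x0, r0), fun o => ?_⟩
      cases o with
      | none => rw [hΦnone]; simp [hβdef]
      | some i =>
          rw [hΦsome]
          have := (hmem (x0, r0)).mp (le_of_eq hfx0)
          simpa [hβdef] using this i
    -- some combined constraint has positive coefficient on s
    have hval : ∀ (j : κ) (s : ℝ),
        ∑ o, μ j o * Φ o (s, (0 : EuclideanSpace ℝ (Fin n) × ℝ)) = μ j none * s := by
      intro j s
      rw [Fintype.sum_option]
      have h1 : Φ none (s, (0 : EuclideanSpace ℝ (Fin n) × ℝ)) = s := by
        rw [hΦnone, map_zero, sub_zero]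
      have h2 : ∀ i, Φ (some i) (s, (0 : EuclideanSpace ℝ (Fin n) × ℝ)) = 0 := fun i => by
        rw [hΦsome]; exact map_zero (φ i)
      rw [h1]
      simp [h2]
    have hex : ∃ j, 0 < μ j none := by
      by_contra hc
      push_neg at hc
      have hzero' : ∀ j, μ j none = 0 := fun j => le_antisymm (hc j) (hμpos j none)
      obtain ⟨s0, hs0⟩ := hQne
      have hs0' : s0 ∈ {s : ℝ | ∃ p, ∀ o, Φ o (s, p) ≤ β o} := hs0
      rw [hsets] at hs0'
      have hallS : (r + 1) ∈ {s : ℝ | ∀ j, ∑ o, μ j o * Φ o (s, 0) ≤ ∑ o, μ j o * β o} := by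
        intro j
        have hs := hs0' j
        rw [hval j s0, hzero' j, zero_mul] at hs
        rw [hval j (r + 1), hzero' j, zero_mul]
        exact hs
      rw [← hsets] at hallS
      have := hQub (r + 1) hallS
      linarith
    obtain ⟨j, hj⟩ := hex
    have hrep : ∀ w : EuclideanSpace ℝ (Fin n) × ℝ,
        μ j none * ℓ w = ∑ i, μ j (some i) * φ i w := by
      intro w
      have h := hμzero j w
      rw [Fintype.sum_option, hΦnone] at h
      simp only [hΦsome] at h
      have : μ j none * (0 - ℓ w) + ∑ i, μ j (some i) * φ i w = 0 := h
      nlinarith [this]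
    set lam : Fin m → ℝ := fun i => μ j (some i) / μ j none with hlamdef
    have hlampos : ∀ i, 0 ≤ lam i := fun i => div_nonneg (hμpos j (some i)) hj.le
    have hlamsum : ∀ (g : Fin m → ℝ),
        ∑ i, lam i * g i = (∑ i, μ j (some i) * g i) / μ j none := by
      intro g
      rw [Finset.sum_div]
      exact Finset.sum_congr rfl fun i _ => by rw [hlamdef]; ring
    refine ⟨lam, hlampos, ?_, ?_⟩
    · -- ∑ lam i • v i = u
      have hy : ∀ y : EuclideanSpace ℝ (Fin n), ⟪u, y⟫ = ∑ i, lam i * ⟪v i, y⟫ := by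
        intro y
        have h := hrep (y, 0)
        rw [hℓ] at h
        simp only [hφ] at h
        have h' : μ j none * ⟪u, y⟫ = ∑ i, μ j (some i) * ⟪v i, y⟫ := by
          have hcong : ∑ i, μ j (some i) * (⟪v i, (y, (0:ℝ)).1⟫ + a i * (y, (0:ℝ)).2)
              = ∑ i, μ j (some i) * ⟪v i, y⟫ :=
            Finset.sum_congr rfl fun i _ => by norm_num
          rw [hcong] at h
          simpa using h
        rw [hlamsum (fun i => ⟪v i, y⟫), ← h', mul_div_cancel_left₀ _ (ne_of_gt hj)]
      have hdiff : ∀ y : EuclideanSpace ℝ (Fin n), ⟪u - ∑ i, lam i • v i, y⟫ = 0 := by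
        intro y
        rw [inner_sub_left, sum_inner, hy y]
        have : ∑ i, ⟪lam i • v i, y⟫ = ∑ i, lam i * ⟪v i, y⟫ :=
          Finset.sum_congr rfl fun i _ => real_inner_smul_left _ _ _
        rw [this]
        ring
      have := hdiff (u - ∑ i, lam i • v i)
      rw [inner_self_eq_zero] at this
      rw [sub_eq_zero] at this
      exact this.symm
    · -- ∑ lam i * a i = -1
      have h := hrep (0, 1)
      rw [hℓ] at h
      simp only [hφ] at h
      have h' : μ j none * (-1) = ∑ i, μ j (some i) * a i := by
        have hcong : ∑ i, μ j (some i) * (⟪v i, ((0 : EuclideanSpace ℝ (Fin n)), (1:ℝ)).1⟫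
            + a i * ((0 : EuclideanSpace ℝ (Fin n)), (1:ℝ)).2)
            = ∑ i, μ j (some i) * a i :=
          Finset.sum_congr rfl fun i _ => by simp [inner_zero_right]
        rw [hcong] at h
        simpa [inner_zero_right] using h
      rw [hlamsum a, ← h']
      field_simp
  -- PART 1b : every u in dom fstar is a subgradient at some point
  have part1b : ∀ u : EuclideanSpace ℝ (Fin n), fstar u ≠ ⊤ →
      ∃ x, ∀ y, f x + ((⟪u, y - x⟫ : ℝ) : EReal) ≤ f y := by
    intro u hu
    set ℓ : (EuclideanSpace ℝ (Fin n) × ℝ) →ₗ[ℝ] ℝ :=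
      ((innerSL ℝ u).toLinearMap).comp (LinearMap.fst ℝ (EuclideanSpace ℝ (Fin n)) ℝ)
        - LinearMap.snd ℝ (EuclideanSpace ℝ (Fin n)) ℝ with hℓdef
    have hℓ : ∀ p : EuclideanSpace ℝ (Fin n) × ℝ, ℓ p = ⟪u, p.1⟫ - p.2 := by
      intro p; simp [hℓdef]
    set Ψ : (Fin m ⊕ Bool) → (ℝ × (EuclideanSpace ℝ (Fin n) × ℝ)) →ₗ[ℝ] ℝ :=
      Sum.elim (fun i => (φ i).comp (LinearMap.snd ℝ ℝ (EuclideanSpace ℝ (Fin n) × ℝ)))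
        (fun bb => cond bb (LinearMap.fst ℝ ℝ (EuclideanSpace ℝ (Fin n) × ℝ)
            - ℓ.comp (LinearMap.snd ℝ ℝ (EuclideanSpace ℝ (Fin n) × ℝ)))
          (ℓ.comp (LinearMap.snd ℝ ℝ (EuclideanSpace ℝ (Fin n) × ℝ))
            - LinearMap.fst ℝ ℝ (EuclideanSpace ℝ (Fin n) × ℝ))) with hΨdef
    set c : (Fin m ⊕ Bool) → ℝ := Sum.elim b (fun _ => 0) with hcdef
    set Q : Set ℝ := {s : ℝ | ∃ p : EuclideanSpace ℝ (Fin n) × ℝ, ∀ o, Ψ o (s, p) ≤ c o}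
      with hQdef
    have hQiff : ∀ s : ℝ, s ∈ Q ↔ ∃ p : EuclideanSpace ℝ (Fin n) × ℝ,
        f p.1 ≤ ((p.2 : ℝ) : EReal) ∧ ⟪u, p.1⟫ - p.2 = s := by
      intro s
      constructor
      · rintro ⟨p, hp⟩
        refine ⟨p, (hmem p).mpr fun i => by simpa [hΨdef, hcdef] using hp (Sum.inl i), ?_⟩
        have h1 := hp (Sum.inr true)
        have h2 := hp (Sum.inr false)
        simp only [hΨdef, hcdef, Sum.elim_inr, cond_true, cond_false, LinearMap.sub_apply,
          LinearMap.comp_apply, LinearMap.fst_apply, LinearMap.snd_apply] at h1 h2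
        rw [hℓ] at h1 h2
        linarith
      · rintro ⟨p, hp1, hp2⟩
        refine ⟨p, fun o => ?_⟩
        rcases o with i | bb
        · simpa [hΨdef, hcdef] using ((hmem p).mp hp1) i
        · cases bb
          · simp only [hΨdef, hcdef, Sum.elim_inr, cond_false,
              LinearMap.sub_apply, LinearMap.comp_apply, LinearMap.fst_apply,
              LinearMap.snd_apply]
            rw [hℓ]
            linarith
          · simp only [hΨdef, hcdef, Sum.elim_inr, cond_true, LinearMap.sub_apply,
              LinearMap.comp_apply, LinearMap.fst_apply, LinearMap.snd_apply]
            rw [hℓ]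
            linarith
    obtain ⟨κ, _, χ, d, hQrep⟩ := hpoly_proj Ψ c
    have hQclosed : IsClosed Q := by
      rw [hQdef, hQrep]
      exact isClosed_iInter fun j =>
        isClosed_le (χ j).continuous_of_finiteDimensional continuous_const
    have hQne : Q.Nonempty := ⟨⟪u, x0⟫ - r0, (hQiff _).mpr ⟨(x0, r0), le_of_eq hfx0, rfl⟩⟩
    set r := (fstar u).toReal with hrdef
    have hr : ((r : ℝ) : EReal) = fstar u := EReal.coe_toReal hu (hfne_bot u)
    have hQbdd : BddAbove Q := by
      refine ⟨r, fun s hs => ?_⟩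
      obtain ⟨p, hp1, hp2⟩ := (hQiff s).mp hs
      rw [← hp2]
      exact hQbound u r hr p.1 p.2 hp1
    set q0 := sSup Q with hq0def
    have hq0 : q0 ∈ Q := hQclosed.csSup_mem hQne hQbdd
    have hub : ∀ s ∈ Q, s ≤ q0 := fun s hs => le_csSup hQbdd hs
    obtain ⟨p, hpP, hpval⟩ := (hQiff q0).mp hq0
    have hle1 : fstar u ≤ ((q0 : ℝ) : EReal) :=
      hterm_le u q0 fun y s' hys => hub _ ((hQiff _).mpr ⟨(y, s'), le_of_eq hys, rfl⟩)
    have hpt : f p.1 ≠ ⊤ := ne_top_of_le_ne_top (EReal.coe_ne_top p.2) hpP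
    set s := (f p.1).toReal with hsdef
    have hs : f p.1 = ((s : ℝ) : EReal) := (EReal.coe_toReal hpt (hnebot p.1)).symm
    have hst : s ≤ p.2 := by
      have := hpP
      rw [hs] at this
      exact EReal.coe_le_coe_iff.mp this
    have hts : p.2 ≤ s := by
      have h1 : ((⟪u, p.1⟫ - s : ℝ) : EReal) ≤ fstar u := by
        rw [hfstar]
        refine le_iSup_of_le p.1 (le_of_eq ?_)
        rw [hs, ← EReal.coe_sub]
      have h2 := EReal.coe_le_coe_iff.mp (h1.trans hle1)
      linarith
    have hseq : s = p.2 := le_antisymm hst hts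
    refine ⟨p.1, fun y => ?_⟩
    by_cases hy : f y = ⊤
    · rw [hy]; exact le_top
    · set s' := (f y).toReal with hs'def
      have hs' : f y = ((s' : ℝ) : EReal) := (EReal.coe_toReal hy (hnebot y)).symm
      have hyQ : ⟪u, y⟫ - s' ≤ q0 := hub _ ((hQiff _).mpr ⟨(y, s'), le_of_eq hs', rfl⟩)
      rw [hs, hs', inner_sub_right, ← EReal.coe_add]
      apply EReal.coe_le_coe_iff.mpr
      linarith
  -- PART 2 : polyhedral description of dom fstar
  have hdompair : ∀ u : EuclideanSpace ℝ (Fin n), fstar u ≠ ⊤ ↔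
      ∃ lam : Fin m → ℝ, (∀ i, 0 ≤ lam i) ∧ (∑ i, lam i • v i = u) ∧
        (∑ i, lam i * a i = -1) := by
    intro u
    exact ⟨lam_of_dom u, fun ⟨lam, h1, h2, h3⟩ => dom_of_lam u lam h1 h2 h3⟩
  -- constraints on (u, lam)
  set prj : Fin m → ((EuclideanSpace ℝ (Fin n)) × (Fin m → ℝ)) →ₗ[ℝ] ℝ := fun i =>
    (LinearMap.proj i).comp (LinearMap.snd ℝ (EuclideanSpace ℝ (Fin n)) (Fin m → ℝ)) with hprjdef
  set crd : Fin n → ((EuclideanSpace ℝ (Fin n)) × (Fin m → ℝ)) →ₗ[ℝ] ℝ := fun jj =>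
    ((EuclideanSpace.proj jj).toLinearMap).comp
      (LinearMap.fst ℝ (EuclideanSpace ℝ (Fin n)) (Fin m → ℝ)) with hcrddef
  set Θ : (Fin m ⊕ (Bool ⊕ (Fin n × Bool))) →
      ((EuclideanSpace ℝ (Fin n)) × (Fin m → ℝ)) →ₗ[ℝ] ℝ :=
    Sum.elim (fun i => -(prj i))
      (Sum.elim
        (fun bb => cond bb (∑ i, (a i) • prj i) (-(∑ i, (a i) • prj i)))
        (fun q => cond q.2 (crd q.1 - ∑ i, (v i q.1) • prj i)
          (∑ i, (v i q.1) • prj i - crd q.1))) with hΘdef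
  set ee : (Fin m ⊕ (Bool ⊕ (Fin n × Bool))) → ℝ :=
    Sum.elim (fun _ => 0) (Sum.elim (fun bb => cond bb (-1) 1) (fun _ => 0)) with heedef
  have hsumapply : ∀ (g : Fin m → ℝ) (uu : EuclideanSpace ℝ (Fin n)) (lam : Fin m → ℝ),
      (∑ i, (g i) • prj i) (uu, lam) = ∑ i, g i * lam i := by
    intro g uu lam
    rw [LinearMap.sum_apply]
    exact Finset.sum_congr rfl fun i _ => by simp [hprjdef]
  have hΘ1 : ∀ (i : Fin m) (uu : EuclideanSpace ℝ (Fin n)) (lam : Fin m → ℝ),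
      Θ (Sum.inl i) (uu, lam) = -(lam i) := by
    intro i uu lam; simp [hΘdef, hprjdef]
  have hΘ2t : ∀ (uu : EuclideanSpace ℝ (Fin n)) (lam : Fin m → ℝ),
      Θ (Sum.inr (Sum.inl true)) (uu, lam) = ∑ i, a i * lam i := by
    intro uu lam
    show (∑ i, (a i) • prj i) (uu, lam) = _
    exact hsumapply a uu lam
  have hΘ2f : ∀ (uu : EuclideanSpace ℝ (Fin n)) (lam : Fin m → ℝ),
      Θ (Sum.inr (Sum.inl false)) (uu, lam) = -(∑ i, a i * lam i) := by
    intro uu lam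
    show (-(∑ i, (a i) • prj i)) (uu, lam) = _
    rw [LinearMap.neg_apply, hsumapply a uu lam]
  have hΘ3t : ∀ (jj : Fin n) (uu : EuclideanSpace ℝ (Fin n)) (lam : Fin m → ℝ),
      Θ (Sum.inr (Sum.inr (jj, true))) (uu, lam) = uu jj - ∑ i, v i jj * lam i := by
    intro jj uu lam
    show (crd jj - ∑ i, (v i jj) • prj i) (uu, lam) = _
    rw [LinearMap.sub_apply, hsumapply (fun i => v i jj) uu lam]
    rfl
  have hΘ3f : ∀ (jj : Fin n) (uu : EuclideanSpace ℝ (Fin n)) (lam : Fin m → ℝ),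
      Θ (Sum.inr (Sum.inr (jj, false))) (uu, lam) = (∑ i, v i jj * lam i) - uu jj := by
    intro jj uu lam
    show ((∑ i, (v i jj) • prj i) - crd jj) (uu, lam) = _
    rw [LinearMap.sub_apply, hsumapply (fun i => v i jj) uu lam]
    rfl
  have hvecsum : ∀ (lam : Fin m → ℝ) (jj : Fin n),
      (∑ i, lam i • v i) jj = ∑ i, v i jj * lam i := by
    intro lam jj
    rw [WithLp.ofLp_sum, Finset.sum_apply]
    exact Finset.sum_congr rfl fun i _ => by
      show lam i * v i jj = v i jj * lam i
      ring
  have hdomset : {u : EuclideanSpace ℝ (Fin n) | fstar u ≠ ⊤}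
      = {u : EuclideanSpace ℝ (Fin n) | ∃ lam : Fin m → ℝ, ∀ o, Θ o (u, lam) ≤ ee o} := by
    ext u
    simp only [Set.mem_setOf_eq, hdompair u]
    constructor
    · rintro ⟨lam, h1, h2, h3⟩
      have h3' : ∑ i, a i * lam i = -1 := by
        rw [← h3]; exact Finset.sum_congr rfl fun i _ => mul_comm _ _
      have hcoord : ∀ jj, u jj = ∑ i, v i jj * lam i := by
        intro jj
        rw [← h2, hvecsum]
      refine ⟨lam, fun o => ?_⟩
      rcases o with i | (bb | q)
      · rw [hΘ1]
        have := h1 i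
        simp only [heedef, Sum.elim_inl]
        linarith
      · cases bb
        · rw [hΘ2f, h3']
          simp [heedef]
        · rw [hΘ2t, h3']
          simp [heedef]
      · obtain ⟨jj, bb⟩ := q
        cases bb
        · rw [hΘ3f, ← hcoord jj]
          simp [heedef]
        · rw [hΘ3t, ← hcoord jj]
          simp [heedef]
    · rintro ⟨lam, hlam⟩
      have h1 : ∀ i, 0 ≤ lam i := by
        intro i
        have := hlam (Sum.inl i)
        rw [hΘ1] at this
        simp only [heedef, Sum.elim_inl] at this
        linarith
      have h3' : ∑ i, a i * lam i = -1 := by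
        have ht := hlam (Sum.inr (Sum.inl true))
        have hf := hlam (Sum.inr (Sum.inl false))
        rw [hΘ2t] at ht
        rw [hΘ2f] at hf
        simp only [heedef, Sum.elim_inr, Sum.elim_inl, cond_true, cond_false] at ht hf
        linarith
      have hcoord : ∀ jj, u jj = ∑ i, v i jj * lam i := by
        intro jj
        have ht := hlam (Sum.inr (Sum.inr (jj, true)))
        have hf := hlam (Sum.inr (Sum.inr (jj, false)))
        rw [hΘ3t] at ht
        rw [hΘ3f] at hf
        simp only [heedef, Sum.elim_inr] at ht hf
        linarith
      refine ⟨lam, h1, ?_, ?_⟩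
      · ext jj
        rw [hvecsum]
        exact (hcoord jj).symm
      · rw [← h3']
        exact Finset.sum_congr rfl fun i _ => mul_comm _ _
  obtain ⟨κ, _, χ, d, hrep0⟩ := hpoly_proj Θ ee
  have hdomrep : {u : EuclideanSpace ℝ (Fin n) | fstar u ≠ ⊤} = ⋂ j, {u | χ j u ≤ d j} :=
    hdomset.trans hrep0
  set k := Fintype.card κ with hkdef
  set σ : Fin k ≃ κ := (Fintype.equivFin κ).symm with hσdef
  set w : Fin k → EuclideanSpace ℝ (Fin n) := fun i =>
    (InnerProductSpace.toDual ℝ (EuclideanSpace ℝ (Fin n))).symm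
      ((χ (σ i)).toContinuousLinearMap) with hwdef
  have hwinner : ∀ (i : Fin k) (uu : EuclideanSpace ℝ (Fin n)), ⟪w i, uu⟫ = χ (σ i) uu := by
    intro i uu
    rw [hwdef]
    rw [InnerProductSpace.toDual_symm_apply]
    simp
  have hfin : {u : EuclideanSpace ℝ (Fin n) | fstar u ≠ ⊤}
      = ⋂ i : Fin k, {u : EuclideanSpace ℝ (Fin n) | ⟪w i, u⟫ ≤ d (σ i)} := by
    rw [hdomrep]
    ext uu
    simp only [Set.mem_iInter, Set.mem_setOf_eq, hwinner]
    exact ⟨fun h i => h (σ i), fun h j => by simpa using h (σ.symm j)⟩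
  refine ⟨?_, ⟨k, w, fun i => d (σ i), hfin⟩, ?_, ?_⟩
  · ext u
    simp only [Set.mem_iUnion, Set.mem_setOf_eq]
    exact ⟨fun ⟨x, hx⟩ => part1a x u hx, fun h => part1b u h⟩
  · rw [hfin]
    exact isClosed_iInter fun i =>
      isClosed_le (Continuous.inner continuous_const continuous_id) continuous_const
  · rw [hfin]
    refine convex_iInter fun i => convex_halfSpace_le ?_ _
    exact ⟨fun x y => inner_add_right _ _ _, fun cc x => by
      rw [real_inner_smul_right]; rfl⟩
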